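/- arXiv:1004.0904 — 2 statements merged into one kernel-verified Lean document; each statement's English description precedes it below -/
import Mathlib

section
/- Let a, c, d be integers with a·d − c ≠ 0. Then the matrix [[a, 1], [c, d]] is similar over ℤ to the matrix [[a+d, c−a·d], [1, 0]]; that is, there exists P ∈ GL₂(ℤ) with P⁻¹ · [[a, 1], [c, d]] · P = [[a+d, c−a·d], [1, 0]]. -/
/-- Corollary 1: the matrix `[[a,1],[c,d]]` with `a*d - c ≠ 0` is similar over `ℤ`
to `[[a+d,c-a*d],[1,0]]`. -/
theorem stmt_2 (a c d : ℤ) (h : a * d - c ≠ 0) :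
    ∃ P : Matrix (Fin 2) (Fin 2) ℤ, IsUnit P.det ∧
      P⁻¹ * !![a, 1; c, d] * P = !![a + d, c - a * d; 1, 0] := by
  refine ⟨!![0, 1; 1, -a], ?_, ?_⟩
  · have : (!![(0:ℤ), 1; 1, -a]).det = -1 := by
      simp [Matrix.det_fin_two_of]
    rw [this]
    exact isUnit_one.neg
  · have hdet : IsUnit (!![(0:ℤ), 1; 1, -a]).det := by
      have : (!![(0:ℤ), 1; 1, -a]).det = -1 := by
        simp [Matrix.det_fin_two_of]
      rw [this]; exact isUnit_one.neg
    have key : !![a, 1; c, d] * !![(0:ℤ), 1; 1, -a] =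
        !![(0:ℤ), 1; 1, -a] * !![a + d, c - a * d; 1, 0] := by
      ext i j
      fin_cases i <;> fin_cases j <;>
        simp [Matrix.mul_apply, Fin.sum_univ_two] <;> ring
    calc (!![(0:ℤ), 1; 1, -a])⁻¹ * !![a, 1; c, d] * !![(0:ℤ), 1; 1, -a]
        = (!![(0:ℤ), 1; 1, -a])⁻¹ * (!![a, 1; c, d] * !![(0:ℤ), 1; 1, -a]) := by
          rw [Matrix.mul_assoc]
      _ = (!![(0:ℤ), 1; 1, -a])⁻¹ * (!![(0:ℤ), 1; 1, -a] * !![a + d, c - a * d; 1, 0]) := by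
          rw [key]
      _ = !![a + d, c - a * d; 1, 0] := by
          rw [← Matrix.mul_assoc, Matrix.nonsing_inv_mul _ hdet, Matrix.one_mul]
end

section
/- Let n ≥ 1 and let a, b, c, d be n×n real matrices satisfying aᵗ·d − cᵗ·b = I, aᵗ·c = cᵗ·a, and bᵗ·d = dᵗ·b (i.e., the block matrix [[a, b], [c, d]] is symplectic). Define the 2n×2n block matrices A = [[a, 0], [0, a]], B = [[0, b], [−b, 0]], C = [[0, −c], [c, 0]], D = [[d, 0], [0, d]]. Then the Rieffel–Schwarz conditions hold: Aᵗ·D + Cᵗ·B = I, Aᵗ·C + Cᵗ·A = 0, and Bᵗ·D + Dᵗ·B = 0; equivalently, the 4n×4n block matrix M = [[A, B], [C, D]] satisfies Mᵗ·Q·M = Q for Q = [[0, I_{2n}], [I_{2n}, 0]]. -/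
open Matrix

/-- Second proof of Lemma 7: a symplectic matrix `[[a,b],[c,d]]` gives rise, via the
block construction `A = [[a,0],[0,a]]`, `B = [[0,b],[−b,0]]`, `C = [[0,−c],[c,0]]`,
`D = [[d,0],[0,d]]`, to a matrix satisfying the Rieffel–Schwarz conditions, i.e.
`AᵗD + CᵗB = I`, `AᵗC + CᵗA = 0`, `BᵗD + DᵗB = 0`, and equivalently
`MᵗQM = Q` for `M = [[A,B],[C,D]]` and `Q = [[0,I],[I,0]]`. -/
theorem stmt_10 (n : ℕ) (hn : 1 ≤ n) (a b c d : Matrix (Fin n) (Fin n) ℝ)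
    (h1 : aᵀ * d - cᵀ * b = 1) (h2 : aᵀ * c = cᵀ * a) (h3 : bᵀ * d = dᵀ * b)
    (A B C D : Matrix (Fin n ⊕ Fin n) (Fin n ⊕ Fin n) ℝ)
    (hA : A = Matrix.fromBlocks a 0 0 a) (hB : B = Matrix.fromBlocks 0 b (-b) 0)
    (hC : C = Matrix.fromBlocks 0 (-c) c 0) (hD : D = Matrix.fromBlocks d 0 0 d) :
    (Aᵀ * D + Cᵀ * B = 1 ∧ Aᵀ * C + Cᵀ * A = 0 ∧ Bᵀ * D + Dᵀ * B = 0) ∧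
    (Matrix.fromBlocks A B C D)ᵀ *
        Matrix.fromBlocks (0 : Matrix (Fin n ⊕ Fin n) (Fin n ⊕ Fin n) ℝ) 1 1 0 *
        Matrix.fromBlocks A B C D =
      Matrix.fromBlocks (0 : Matrix (Fin n ⊕ Fin n) (Fin n ⊕ Fin n) ℝ) 1 1 0 := by
  subst hA hB hC hD
  have e1 : aᵀ * d - cᵀ * b = 1 := h1
  have e1' : aᵀ * d + -(cᵀ * b) = 1 := by rw [← sub_eq_add_neg]; exact h1
  have key1 : (Matrix.fromBlocks a 0 0 a)ᵀ * Matrix.fromBlocks d 0 0 d +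
      (Matrix.fromBlocks 0 (-c) c 0)ᵀ * Matrix.fromBlocks 0 b (-b) 0 =
      (1 : Matrix (Fin n ⊕ Fin n) (Fin n ⊕ Fin n) ℝ) := by
    simp [Matrix.fromBlocks_transpose, Matrix.fromBlocks_multiply,
      Matrix.fromBlocks_add, ← Matrix.fromBlocks_one, Matrix.mul_neg, Matrix.neg_mul, e1']
  have key2 : (Matrix.fromBlocks a 0 0 a)ᵀ * Matrix.fromBlocks 0 (-c) c 0 +
      (Matrix.fromBlocks 0 (-c) c 0)ᵀ * Matrix.fromBlocks a 0 0 a = 0 := by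
    simp [Matrix.fromBlocks_transpose, Matrix.fromBlocks_multiply,
      Matrix.fromBlocks_add, Matrix.mul_neg, Matrix.neg_mul, h2,
      ← Matrix.fromBlocks_zero]
  have key3 : (Matrix.fromBlocks 0 b (-b) 0)ᵀ * Matrix.fromBlocks d 0 0 d +
      (Matrix.fromBlocks d 0 0 d)ᵀ * Matrix.fromBlocks 0 b (-b) 0 = 0 := by
    simp [Matrix.fromBlocks_transpose, Matrix.fromBlocks_multiply,
      Matrix.fromBlocks_add, Matrix.mul_neg, Matrix.neg_mul, h3,
      ← Matrix.fromBlocks_zero]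
  refine ⟨⟨key1, key2, key3⟩, ?_⟩
  have key1' : (Matrix.fromBlocks 0 b (-b) 0)ᵀ * Matrix.fromBlocks 0 (-c) c 0 +
      (Matrix.fromBlocks d 0 0 d)ᵀ * Matrix.fromBlocks a 0 0 a =
      (1 : Matrix (Fin n ⊕ Fin n) (Fin n ⊕ Fin n) ℝ) := by
    have := congrArg Matrix.transpose key1
    simpa [Matrix.transpose_add, Matrix.transpose_mul, add_comm] using this
  have f1 : -(cᵀ * b) + aᵀ * d = (1 : Matrix (Fin n) (Fin n) ℝ) := by
    rw [add_comm]; exact e1'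
  have f2 : dᵀ * a + -(bᵀ * c) = (1 : Matrix (Fin n) (Fin n) ℝ) := by
    have := congrArg Matrix.transpose h1
    simpa [Matrix.transpose_sub, Matrix.transpose_mul, sub_eq_add_neg] using this
  simp [Matrix.fromBlocks_transpose, Matrix.fromBlocks_multiply, Matrix.fromBlocks_add,
    Matrix.mul_neg, Matrix.neg_mul, ← Matrix.fromBlocks_one, h2, h3, f1, f2]
end
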